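/- Let p : (ZMod 2)^n → ZMod 2 be p(x) = ∑_{0≤i<j<n} x_i x_j (the fully-connected quadratic), and let s(x) = 2^(−n/2)(−1)^(p(x)). Then s is equivalent under local unitary transformations to the GHZ state g = (e_0⊗⋯⊗e_0 + e_1⊗⋯⊗e_1)/√2: explicitly, applying to every qubit the unitary N = (1/√2)[[1,i],[1,−i]] and then to one fixed qubit the diagonal unitary diag(ω^7, ω) with ω = e^{iπ/4} maps s to g up to global phase. -/

import Mathlib

open scoped Classical

/-- The NegaHadamard matrix `N = (1/√2)[[1,i],[1,−i]]`, rows/columns indexed by `ZMod 2`. -/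
noncomputable def negaHadamard : Matrix (ZMod 2) (ZMod 2) ℂ := fun a b =>
  ((Real.sqrt 2)⁻¹ : ℝ) * (if b = 0 then 1 else if a = 0 then Complex.I else -Complex.I)

/-- `ω = e^{iπ/4}`. -/
noncomputable def omega8 : ℂ := Complex.exp (Real.pi * Complex.I / 4)

/-- The diagonal unitary `diag(ω⁷, ω)`. -/
noncomputable def diagCorrection : Matrix (ZMod 2) (ZMod 2) ℂ := fun a b =>
  if a = b then (if a = 0 then omega8 ^ 7 else omega8) else 0

/-! ### Auxiliary definitions and lemmas -/

noncomputable def chiR (a : ZMod 2) : ℂ := (-1 : ℂ) ^ a.val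

lemma chiR_add (a b : ZMod 2) : chiR (a + b) = chiR a * chiR b := by
  rcases (show a = 0 ∨ a = 1 from by revert a; decide) with rfl | rfl <;>
  rcases (show b = 0 ∨ b = 1 from by revert b; decide) with rfl | rfl <;>
    simp [chiR, show (1:ZMod 2).val = 1 from rfl, show (1 + 1 : ZMod 2) = 0 from rfl,
      show (2 : ZMod 2) = 0 from rfl]

lemma chiR_zero : chiR 0 = 1 := by simp [chiR]
lemma chiR_one : chiR 1 = -1 := by simp [chiR, show (1:ZMod 2).val = 1 from rfl]
lemma chiR_sq (a : ZMod 2) : chiR a * chiR a = 1 := by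
  rcases (show a = 0 ∨ a = 1 from by revert a; decide) with rfl | rfl <;>
    simp [chiR, show (1:ZMod 2).val = 1 from rfl]

lemma chiR_sum {α : Type*} (S : Finset α) (v : α → ZMod 2) :
    chiR (∑ i ∈ S, v i) = ∏ i ∈ S, chiR (v i) := by
  induction S using Finset.cons_induction with
  | empty => simp [chiR]
  | cons a S h ih => rw [Finset.sum_cons, Finset.prod_cons, chiR_add, ih]

lemma keyA {n : ℕ} (y : Fin n → ZMod 2) (S : Finset (Fin n)) :
    Complex.I ^ (∑ i ∈ S, (y i).val) *
      chiR (∑ i ∈ S, ∑ j ∈ S, if i < j then y i * y j else 0)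
    = (1 + Complex.I)/2 + (1 - Complex.I)/2 * chiR (∑ i ∈ S, y i) := by
  induction S using Finset.cons_induction with
  | empty => simp [chiR]; ring
  | cons k S hk ih =>
    have hP : (∑ i ∈ Finset.cons k S hk, ∑ j ∈ Finset.cons k S hk,
          if i < j then y i * y j else 0)
        = (∑ i ∈ S, ∑ j ∈ S, if i < j then y i * y j else 0) + y k * ∑ j ∈ S, y j := by
      rw [Finset.sum_cons]
      simp only [Finset.sum_cons]
      rw [show (if k < k then y k * y k else 0) = 0 by simp]
      have : ∀ i ∈ S, ((if i < k then y i * y k else 0) +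
          ∑ j ∈ S, if i < j then y i * y j else 0)
          = (∑ j ∈ S, if i < j then y i * y j else 0) +
            (if i < k then y i * y k else 0) := fun i _ => add_comm _ _
      rw [Finset.sum_congr rfl this, Finset.sum_add_distrib]
      have h2 : (∑ j ∈ S, if k < j then y k * y j else 0) +
          (∑ i ∈ S, if i < k then y i * y k else 0)
          = y k * ∑ j ∈ S, y j := by
        rw [← Finset.sum_add_distrib, Finset.mul_sum]
        refine Finset.sum_congr rfl fun j hj => ?_
        have hjk : j ≠ k := fun h => hk (h ▸ hj)
        rcases lt_or_gt_of_ne hjk with h | h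
        · simp [h, not_lt_of_gt h, mul_comm]
        · simp [h, not_lt_of_gt h]
      ring_nf
      ring_nf at h2
      linear_combination h2
    rw [hP, Finset.sum_cons, Finset.sum_cons, chiR_add, pow_add]
    have hcase : ∀ a : ZMod 2, a = 0 ∨ a = 1 := by decide
    rcases hcase (y k) with hyk | hyk
    · rw [hyk]
      simp only [ZMod.val_zero, pow_zero, zero_mul, chiR_zero, one_mul, zero_add, mul_one]
      exact ih
    · rw [hyk]
      have hval : (1 : ZMod 2).val = 1 := rfl
      rw [hval, pow_one, show (1:ZMod 2) * (∑ j ∈ S, y j) = ∑ j ∈ S, y j from one_mul _,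
        chiR_add 1, chiR_one]
      have hsq := chiR_sq (∑ j ∈ S, y j)
      linear_combination (Complex.I * chiR (∑ j ∈ S, y j)) * ih
        + (Complex.I * (1 - Complex.I)/2) * hsq
        + ((chiR (∑ j ∈ S, y j) - 1)/2) * Complex.I_sq

lemma chiR_eval (c : ZMod 2) : (1 : ℂ) + chiR c = if c = 0 then 2 else 0 := by
  rcases (show c = 0 ∨ c = 1 from by revert c; decide) with h | h <;>
    simp [h, chiR, show (1:ZMod 2).val = 1 from rfl] <;> norm_num

lemma sum_zmod2 (F : ZMod 2 → ℂ) : ∑ b : ZMod 2, F b = F 0 + F 1 := by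
  have : (Finset.univ : Finset (ZMod 2)) = {0, 1} := by decide
  rw [this, Finset.sum_insert (by decide), Finset.sum_singleton]

lemma sum_prod_chiR {n : ℕ} (c : Fin n → ZMod 2) :
    (∑ y : Fin n → ZMod 2, ∏ i, chiR (c i * y i))
      = if ∀ i, c i = 0 then (2:ℂ)^n else 0 := by
  rw [← Fintype.prod_sum (fun i (b : ZMod 2) => chiR (c i * b))]
  have h1 : ∀ i : Fin n, (∑ b : ZMod 2, chiR (c i * b)) = if c i = 0 then 2 else 0 := by
    intro i
    rw [sum_zmod2]
    simp only [mul_zero, mul_one]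
    rw [show chiR 0 = 1 by simp [chiR]]
    exact chiR_eval (c i)
  rw [Finset.prod_congr rfl (fun i _ => h1 i)]
  by_cases h : ∀ i, c i = 0
  · simp [h]
  · push_neg at h
    obtain ⟨i, hi⟩ := h
    rw [if_neg (by push_neg; exact ⟨i, hi⟩)]
    exact Finset.prod_eq_zero (Finset.mem_univ i) (by simp [hi])

lemma negaHadamard_eval (a b : ZMod 2) :
    negaHadamard a b = (((Real.sqrt 2)⁻¹ : ℝ) : ℂ) * Complex.I ^ b.val * chiR (a * b) := by
  rcases (show a = 0 ∨ a = 1 from by revert a; decide) with ha | ha <;>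
  rcases (show b = 0 ∨ b = 1 from by revert b; decide) with hb | hb <;>
    simp [ha, hb, negaHadamard, chiR, show (1:ZMod 2).val = 1 from rfl] <;> ring

lemma DN_eval (a b : ZMod 2) :
    (diagCorrection * negaHadamard) a b
      = (if a = 0 then omega8 ^ 7 else omega8) * negaHadamard a b := by
  rcases (show a = 0 ∨ a = 1 from by revert a; decide) with ha | ha <;>
    simp [ha, Matrix.mul_apply, sum_zmod2, diagCorrection]

lemma sqrt2_sq : ((Real.sqrt 2 : ℝ) : ℂ) * ((Real.sqrt 2 : ℝ) : ℂ) = 2 := by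
  rw [← Complex.ofReal_mul, Real.mul_self_sqrt (by norm_num)]; norm_num

lemma sqrt2_inv : (((Real.sqrt 2)⁻¹ : ℝ) : ℂ) = ((Real.sqrt 2 : ℝ) : ℂ) / 2 := by
  have hs := sqrt2_sq
  have hne : ((Real.sqrt 2 : ℝ) : ℂ) ≠ 0 := by
    intro h; rw [h] at hs; norm_num at hs
  push_cast
  field_simp
  linear_combination -hs

lemma omega8_val : omega8 = ((Real.sqrt 2 / 2 : ℝ) : ℂ) + ((Real.sqrt 2 / 2 : ℝ) : ℂ) * Complex.I := by
  have h : (Real.pi : ℂ) * Complex.I / 4 = ((Real.pi / 4 : ℝ) : ℂ) * Complex.I := by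
    push_cast; ring
  rw [omega8, h, Complex.exp_mul_I, ← Complex.ofReal_cos, ← Complex.ofReal_sin,
    Real.cos_pi_div_four, Real.sin_pi_div_four]

lemma omega8_pow8 : omega8 ^ 8 = 1 := by
  rw [omega8, ← Complex.exp_nat_mul]
  rw [show (8:ℕ) * ((Real.pi : ℂ) * Complex.I / 4) = 2 * Real.pi * Complex.I by push_cast; ring]
  exact Complex.exp_two_pi_mul_I

lemma one_add_I_eq : (1 : ℂ) + Complex.I = ((Real.sqrt 2 : ℝ) : ℂ) * omega8 := by
  rw [omega8_val]
  push_cast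
  linear_combination (-(1 + Complex.I)/2) * sqrt2_sq

lemma key1 : omega8 ^ 7 * ((1 + Complex.I)/2) = (((Real.sqrt 2)⁻¹ : ℝ) : ℂ) := by
  rw [one_add_I_eq, sqrt2_inv]
  linear_combination (((Real.sqrt 2 : ℝ) : ℂ)/2) * omega8_pow8

lemma key2 : omega8 * ((1 - Complex.I)/2) = (((Real.sqrt 2)⁻¹ : ℝ) : ℂ) := by
  rw [omega8_val, sqrt2_inv]
  push_cast
  linear_combination (-(((Real.sqrt 2 : ℝ) : ℂ)/4)) * Complex.I_sq

lemma sqrt_two_pow (n : ℕ) : Real.sqrt (2 ^ n) = (Real.sqrt 2) ^ n := by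
  rw [show (2:ℝ)^n = ((Real.sqrt 2)^n)^2 by
      rw [← pow_mul, mul_comm, pow_mul, Real.sq_sqrt (by norm_num)],
    Real.sqrt_sq (by positivity)]

/-- The fully-connected quadratic phase state `s = 2^{−n/2}(−1)^{∑_{i<j} x_i x_j}`
is mapped, by applying `N` to every qubit followed by `diag(ω⁷,ω)` on one fixed
qubit `f`, to the GHZ state up to a global phase. -/
theorem stmt_15 (n : ℕ) (hn : 1 ≤ n) (f : Fin n)
    (s g : (Fin n → ZMod 2) → ℂ)
    (hs : ∀ x, s x = ((Real.sqrt (2 ^ n))⁻¹ : ℝ) *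
      (-1 : ℂ) ^ ((∑ i : Fin n, ∑ j ∈ Finset.univ.filter (fun j => i < j),
        x i * x j).val))
    (hg : ∀ x, g x =
      if (∀ i, x i = 0) ∨ (∀ i, x i = 1) then ((Real.sqrt 2)⁻¹ : ℝ) else 0) :
    ∃ c : ℂ, ‖c‖ = 1 ∧
      ∀ x, (∑ y : Fin n → ZMod 2,
          (∏ i, (if i = f then diagCorrection * negaHadamard else negaHadamard)
            (x i) (y i)) * s y)
        = c * g x := by
  set r : ℂ := (((Real.sqrt 2)⁻¹ : ℝ) : ℂ) with hr
  have hrr : r * r = (2:ℂ)⁻¹ := by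
    rw [hr, ← Complex.ofReal_mul, ← mul_inv, Real.mul_self_sqrt (by norm_num)]
    norm_num
  refine ⟨1, by simp, fun x => ?_⟩
  set dcx : ℂ := if x f = 0 then omega8 ^ 7 else omega8 with hdcx
  set a : ℂ := (1 + Complex.I)/2 with ha
  set b : ℂ := (1 - Complex.I)/2 with hb
  have per_y : ∀ y : Fin n → ZMod 2,
      (∏ i, (if i = f then diagCorrection * negaHadamard else negaHadamard)
          (x i) (y i)) * s y
      = dcx * ((2:ℂ)^n)⁻¹ *
          (a * ∏ i, chiR (x i * y i) + b * ∏ i, chiR ((x i + 1) * y i)) := by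
    intro y
    -- the product of matrix entries
    have h1 : (∏ i, (if i = f then diagCorrection * negaHadamard else negaHadamard)
          (x i) (y i))
        = dcx * ∏ i, negaHadamard (x i) (y i) := by
      have hpt : ∀ i ∈ Finset.univ,
          (if i = f then diagCorrection * negaHadamard else negaHadamard) (x i) (y i)
          = (if i = f then (if x f = 0 then omega8^7 else omega8) else 1)
              * negaHadamard (x i) (y i) := by
        intro i _
        by_cases hif : i = f
        · subst hif; rw [if_pos rfl, if_pos rfl]; exact DN_eval _ _
        · simp [hif]
      rw [Finset.prod_congr rfl hpt, Finset.prod_mul_distrib]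
      congr 1
      rw [Finset.prod_ite_eq' Finset.univ f
        (fun _ => (if x f = 0 then omega8^7 else omega8))]
      simp [hdcx]
    have h2 : (∏ i, negaHadamard (x i) (y i))
        = r ^ n * (Complex.I ^ (∑ i, (y i).val) * ∏ i, chiR (x i * y i)) := by
      rw [Finset.prod_congr rfl (fun i _ => negaHadamard_eval (x i) (y i)),
        Finset.prod_mul_distrib, Finset.prod_mul_distrib, Finset.prod_const,
        Finset.card_univ, Fintype.card_fin, Finset.prod_pow_eq_pow_sum]
      ring
    have h3 : s y = r ^ n * chiR (∑ i : Fin n, ∑ j ∈ Finset.univ,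
        if i < j then y i * y j else 0) := by
      have hcast : (((Real.sqrt (2 ^ n))⁻¹ : ℝ) : ℂ) = r ^ n := by
        rw [sqrt_two_pow, hr]
        push_cast
        ring
      rw [hs y, hcast]
      congr 1
      have : (∑ i : Fin n, ∑ j ∈ Finset.univ.filter (fun j => i < j), y i * y j)
          = ∑ i : Fin n, ∑ j ∈ Finset.univ, if i < j then y i * y j else 0 := by
        refine Finset.sum_congr rfl fun i _ => ?_
        rw [Finset.sum_filter]
      rw [← this, chiR]
    rw [h1, h2, h3]
    have hAB := keyA y Finset.univ
    have hSig : chiR (∑ i : Fin n, y i) = ∏ i, chiR (y i) := chiR_sum _ _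
    have hprod : (∏ i, chiR (x i * y i)) * (∏ i, chiR (y i))
        = ∏ i, chiR ((x i + 1) * y i) := by
      rw [← Finset.prod_mul_distrib]
      refine Finset.prod_congr rfl fun i _ => ?_
      rw [← chiR_add]
      congr 1
      ring
    have hpow : r ^ n * r ^ n = ((2:ℂ)^n)⁻¹ := by
      rw [← mul_pow, hrr, ← inv_pow]
    calc dcx * (r ^ n * (Complex.I ^ (∑ i, (y i).val) * ∏ i, chiR (x i * y i))) *
          (r ^ n * chiR (∑ i : Fin n, ∑ j ∈ Finset.univ, if i < j then y i * y j else 0))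
        = dcx * (r ^ n * r ^ n) *
            ((Complex.I ^ (∑ i, (y i).val) *
              chiR (∑ i : Fin n, ∑ j ∈ Finset.univ, if i < j then y i * y j else 0)) *
              ∏ i, chiR (x i * y i)) := by ring
      _ = dcx * ((2:ℂ)^n)⁻¹ *
            ((a + b * chiR (∑ i : Fin n, y i)) * ∏ i, chiR (x i * y i)) := by
          rw [hpow, hAB]
      _ = dcx * ((2:ℂ)^n)⁻¹ *
          (a * ∏ i, chiR (x i * y i) + b * ∏ i, chiR ((x i + 1) * y i)) := by
          rw [hSig, ← hprod]; ring
  rw [Finset.sum_congr rfl (fun y _ => per_y y)]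
  rw [← Finset.mul_sum]
  have hsplit : (∑ y : Fin n → ZMod 2,
      (a * ∏ i, chiR (x i * y i) + b * ∏ i, chiR ((x i + 1) * y i)))
      = a * (if ∀ i, x i = 0 then (2:ℂ)^n else 0)
        + b * (if ∀ i, x i + 1 = 0 then (2:ℂ)^n else 0) := by
    rw [Finset.sum_add_distrib, ← Finset.mul_sum, ← Finset.mul_sum,
      sum_prod_chiR x, sum_prod_chiR (fun i => x i + 1)]
  rw [hsplit, hg x, one_mul]
  have h2n : ((2:ℂ)^n)⁻¹ * (2:ℂ)^n = 1 := by
    rw [inv_mul_cancel₀ (pow_ne_zero _ (by norm_num))]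
  have hz2 : ∀ c : ZMod 2, c + 1 = 0 ↔ c = 1 := by decide
  by_cases h0 : ∀ i, x i = 0
  · have hx1 : ¬ ∀ i, x i + 1 = 0 := by
      intro h
      have := (hz2 (x f)).mp (h f)
      rw [h0 f] at this
      exact absurd this (by decide)
    rw [if_pos h0, if_neg hx1, if_pos (Or.inl h0)]
    rw [hdcx, if_pos (h0 f)]
    rw [ha]
    calc omega8 ^ 7 * ((2:ℂ)^n)⁻¹ * ((1 + Complex.I)/2 * 2^n + (1 - Complex.I)/2 * 0)
        = (omega8 ^ 7 * ((1 + Complex.I)/2)) * (((2:ℂ)^n)⁻¹ * 2^n) := by ring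
      _ = r := by rw [key1, h2n, mul_one, hr]
  · by_cases h1 : ∀ i, x i = 1
    · have hx1 : ∀ i, x i + 1 = 0 := fun i => (hz2 (x i)).mpr (h1 i)
      rw [if_neg h0, if_pos hx1, if_pos (Or.inr h1)]
      rw [hdcx, if_neg (by rw [h1 f]; decide)]
      rw [hb]
      calc omega8 * ((2:ℂ)^n)⁻¹ * ((1 + Complex.I)/2 * 0 + (1 - Complex.I)/2 * 2^n)
          = (omega8 * ((1 - Complex.I)/2)) * (((2:ℂ)^n)⁻¹ * 2^n) := by ring
        _ = r := by rw [key2, h2n, mul_one, hr]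
    · have hx1 : ¬ ∀ i, x i + 1 = 0 := fun h => h1 fun i => (hz2 (x i)).mp (h i)
      rw [if_neg h0, if_neg hx1, if_neg (fun h => h.elim h0 h1)]
      push_cast
      ring
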